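/- Let ρ > 0, let d_1,…,d_N ≥ 0 and p_1,…,p_K ≥ 0 be given reals. Then the equation δ = (1/K) Σ_{n=1}^N d_n / ( ρ + (d_n/K) Σ_{k=1}^K p_k / (1 + p_k δ) ) has a unique nonnegative solution δ; moreover this solution equals the first component δ_K(ρ) of the unique nonnegative solution of the two-equation system δ = (1/K) tr( D ( ρ (I_N + δ̃ D) )^{-1} ), δ̃ = (1/K) tr( D̃ ( ρ (I_K + δ D̃) )^{-1} ) with D = diag(d_1,…,d_N), D̃ = diag(p_1,…,p_K). -/

import Mathlib

open scoped BigOperators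

noncomputable def Sfun6 (K : ℕ) (p : Fin K → ℝ) (δ : ℝ) : ℝ :=
  ∑ k, p k / (1 + p k * δ)

noncomputable def Ffun6 (N K : ℕ) (ρ : ℝ) (d : Fin N → ℝ) (p : Fin K → ℝ) (δ : ℝ) : ℝ :=
  (1 / (K : ℝ)) * ∑ n, d n / (ρ + (d n / (K : ℝ)) * Sfun6 K p δ)

section aux

variable {N K : ℕ} {ρ : ℝ} {d : Fin N → ℝ} {p : Fin K → ℝ}

lemma S6_nonneg (hp : ∀ k, 0 ≤ p k) {δ : ℝ} (hδ : 0 ≤ δ) : 0 ≤ Sfun6 K p δ := by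
  apply Finset.sum_nonneg
  intro k _
  have h1 : 0 < 1 + p k * δ := by nlinarith [mul_nonneg (hp k) hδ]
  exact div_nonneg (hp k) h1.le

lemma den6_pos (hK : 0 < K) (hρ : 0 < ρ) (hd : ∀ n, 0 ≤ d n) (hp : ∀ k, 0 ≤ p k)
    {δ : ℝ} (hδ : 0 ≤ δ) (n : Fin N) : 0 < ρ + (d n / (K : ℝ)) * Sfun6 K p δ := by
  have hK0 : (0:ℝ) < K := by exact_mod_cast hK
  have := S6_nonneg hp hδ (K := K) (p := p)
  have h1 : 0 ≤ d n / (K : ℝ) := div_nonneg (hd n) hK0.le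
  nlinarith [mul_nonneg h1 this]

lemma F6_nonneg (hK : 0 < K) (hρ : 0 < ρ) (hd : ∀ n, 0 ≤ d n) (hp : ∀ k, 0 ≤ p k)
    {δ : ℝ} (hδ : 0 ≤ δ) : 0 ≤ Ffun6 N K ρ d p δ := by
  have hK0 : (0:ℝ) < K := by exact_mod_cast hK
  apply mul_nonneg (by positivity)
  apply Finset.sum_nonneg
  intro n _
  exact div_nonneg (hd n) (den6_pos hK hρ hd hp hδ n).le

lemma F6_le (hK : 0 < K) (hρ : 0 < ρ) (hd : ∀ n, 0 ≤ d n) (hp : ∀ k, 0 ≤ p k)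
    {δ : ℝ} (hδ : 0 ≤ δ) :
    Ffun6 N K ρ d p δ ≤ (1 / (K : ℝ)) * ∑ n, d n / ρ := by
  have hK0 : (0:ℝ) < K := by exact_mod_cast hK
  apply mul_le_mul_of_nonneg_left _ (by positivity)
  apply Finset.sum_le_sum
  intro n _
  have h1 : 0 ≤ (d n / (K : ℝ)) * Sfun6 K p δ := by
    exact mul_nonneg (div_nonneg (hd n) hK0.le) (S6_nonneg hp hδ)
  apply div_le_div_of_nonneg_left (hd n) hρ
  linarith

lemma F6_contOn (hK : 0 < K) (hρ : 0 < ρ) (hd : ∀ n, 0 ≤ d n) (hp : ∀ k, 0 ≤ p k) :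
    ContinuousOn (Ffun6 N K ρ d p) (Set.Ici 0) := by
  have hScont : ContinuousOn (Sfun6 K p) (Set.Ici 0) := by
    apply continuousOn_finset_sum
    intro k _
    apply ContinuousOn.div continuousOn_const
    · exact continuousOn_const.add (continuousOn_const.mul continuousOn_id)
    · intro x hx
      have hx0 : 0 ≤ x := hx
      have : 0 < 1 + p k * x := by nlinarith [mul_nonneg (hp k) hx0]
      exact ne_of_gt this
  apply ContinuousOn.mul continuousOn_const
  apply continuousOn_finset_sum
  intro n _
  apply ContinuousOn.div continuousOn_const
  · exact continuousOn_const.add (continuousOn_const.mul hScont)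
  · intro x hx
    exact ne_of_gt (den6_pos hK hρ hd hp hx n)

lemma F6_exists (hK : 0 < K) (hρ : 0 < ρ) (hd : ∀ n, 0 ≤ d n) (hp : ∀ k, 0 ≤ p k) :
    ∃ δ : ℝ, 0 ≤ δ ∧ δ = Ffun6 N K ρ d p δ := by
  have hK0 : (0:ℝ) < K := by exact_mod_cast hK
  set M : ℝ := (1 / (K : ℝ)) * ∑ n, d n / ρ with hM
  have hM0 : 0 ≤ M := by
    apply mul_nonneg (by positivity)
    exact Finset.sum_nonneg fun n _ => div_nonneg (hd n) hρ.le
  set g : ℝ → ℝ := fun δ => Ffun6 N K ρ d p δ - δ with hg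
  have hgc : ContinuousOn g (Set.Icc 0 (M + 1)) := by
    apply ContinuousOn.sub
    · exact (F6_contOn hK hρ hd hp).mono (by
        intro x hx
        exact hx.1)
    · exact continuousOn_id
  have h0 : (0:ℝ) ∈ Set.Icc (g (M + 1)) (g 0) := by
    constructor
    · have := F6_le hK hρ hd hp (δ := M + 1) (by linarith)
      simp only [hg]
      linarith
    · simpa [hg] using F6_nonneg hK hρ hd hp (δ := (0:ℝ)) le_rfl
  have hsub := intermediate_value_Icc' (by linarith : (0:ℝ) ≤ M + 1) hgc
  obtain ⟨c, hc1, hc2⟩ := hsub h0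
  refine ⟨c, hc1.1, ?_⟩
  simp only [hg] at hc2
  linarith

lemma F6_zero_case (hK : 0 < K) (hρ : 0 < ρ) (hd : ∀ n, 0 ≤ d n) (hp : ∀ k, 0 ≤ p k)
    (h : Ffun6 N K ρ d p 0 = 0) : ∀ n, d n = 0 := by
  have hK0 : (0:ℝ) < K := by exact_mod_cast hK
  have hsum : ∑ n, d n / (ρ + (d n / (K : ℝ)) * Sfun6 K p 0) = 0 := by
    have : (1 / (K : ℝ)) ≠ 0 := by positivity
    unfold Ffun6 at h
    exact (mul_eq_zero.mp h).resolve_left this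
  have hterm := (Finset.sum_eq_zero_iff_of_nonneg (fun n _ =>
    div_nonneg (hd n) (den6_pos hK hρ hd hp le_rfl n).le)).mp hsum
  intro n
  have := hterm n (Finset.mem_univ n)
  have hden := den6_pos hK hρ hd hp (le_rfl : (0:ℝ) ≤ 0) n
  rcases div_eq_zero_iff.mp this with h1 | h1
  · exact h1
  · exact absurd h1 (ne_of_gt hden)

lemma F6_scale (hK : 0 < K) (hρ : 0 < ρ) (hd : ∀ n, 0 ≤ d n) (hp : ∀ k, 0 ≤ p k)
    {a b : ℝ} (ha : 0 < a) (hab : a < b)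
    (hfa : a = Ffun6 N K ρ d p a) (hfb : b = Ffun6 N K ρ d p b) : False := by
  have hK0 : (0:ℝ) < K := by exact_mod_cast hK
  set t : ℝ := b / a with ht
  have ht1 : 1 < t := (one_lt_div ha).mpr hab
  have htb : b = t * a := by
    rw [ht, div_mul_cancel₀ _ ha.ne']
  -- S a ≤ t * S b
  have hS : Sfun6 K p a ≤ t * Sfun6 K p b := by
    unfold Sfun6
    rw [Finset.mul_sum]
    apply Finset.sum_le_sum
    intro k _
    rw [mul_div_assoc']
    have h1 : 0 < 1 + p k * a := by nlinarith [mul_nonneg (hp k) ha.le]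
    have h2 : 0 < 1 + p k * b := by nlinarith [mul_nonneg (hp k) (by linarith : (0:ℝ) ≤ b)]
    rw [div_le_div_iff₀ h1 h2]
    rw [htb]
    nlinarith [mul_nonneg (sub_nonneg.2 ht1.le) (hp k), sq_nonneg (p k),
      mul_nonneg (mul_nonneg (hp k) (hp k)) (mul_nonneg (by linarith : (0:ℝ) ≤ t) ha.le)]
  -- existence of a positive d n
  have hdne : ∃ n, 0 < d n := by
    by_contra hcon
    push_neg at hcon
    have hall : ∀ n, d n = 0 := fun n => le_antisymm (hcon n) (hd n)
    have : Ffun6 N K ρ d p a = 0 := by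
      unfold Ffun6
      simp [hall]
    linarith [hfa ▸ this]
  obtain ⟨n0, hn0⟩ := hdne
  -- termwise comparison
  have hterm : ∀ n : Fin N, d n / (ρ + (d n / (K : ℝ)) * Sfun6 K p b) ≤
      t * (d n / (ρ + (d n / (K : ℝ)) * Sfun6 K p a)) := by
    intro n
    rw [mul_div_assoc']
    have hDb := den6_pos hK hρ hd hp (by linarith : (0:ℝ) ≤ b) n
    have hDa := den6_pos hK hρ hd hp ha.le n
    rw [div_le_div_iff₀ hDb hDa]
    have h3 : 0 ≤ d n * (d n / (K:ℝ)) := mul_nonneg (hd n) (div_nonneg (hd n) hK0.le)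
    nlinarith [mul_le_mul_of_nonneg_left hS h3, mul_nonneg (hd n) hρ.le,
      mul_nonneg (sub_nonneg.2 ht1.le) (mul_nonneg (hd n) hρ.le)]
  have hterm_lt : d n0 / (ρ + (d n0 / (K : ℝ)) * Sfun6 K p b) <
      t * (d n0 / (ρ + (d n0 / (K : ℝ)) * Sfun6 K p a)) := by
    rw [mul_div_assoc']
    have hDb := den6_pos hK hρ hd hp (by linarith : (0:ℝ) ≤ b) n0
    have hDa := den6_pos hK hρ hd hp ha.le n0
    rw [div_lt_div_iff₀ hDb hDa]
    have h3 : 0 ≤ d n0 * (d n0 / (K:ℝ)) := mul_nonneg (hd n0) (div_nonneg (hd n0) hK0.le)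
    nlinarith [mul_le_mul_of_nonneg_left hS h3,
      mul_pos hn0 hρ, mul_pos (mul_pos (sub_pos.2 ht1) hn0) hρ]
  have hsumlt : ∑ n, d n / (ρ + (d n / (K : ℝ)) * Sfun6 K p b) <
      ∑ n, t * (d n / (ρ + (d n / (K : ℝ)) * Sfun6 K p a)) := by
    apply Finset.sum_lt_sum (fun n _ => hterm n) ⟨n0, Finset.mem_univ n0, hterm_lt⟩
  have hfinal : Ffun6 N K ρ d p b < t * Ffun6 N K ρ d p a := by
    unfold Ffun6
    rw [← Finset.mul_sum] at hsumlt
    calc (1 / (K:ℝ)) * ∑ n, d n / (ρ + (d n / (K : ℝ)) * Sfun6 K p b)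
        < (1 / (K:ℝ)) * (t * ∑ n, d n / (ρ + (d n / (K : ℝ)) * Sfun6 K p a)) := by
          apply mul_lt_mul_of_pos_left hsumlt (by positivity)
      _ = t * ((1 / (K:ℝ)) * ∑ n, d n / (ρ + (d n / (K : ℝ)) * Sfun6 K p a)) := by ring
  rw [← hfa, ← hfb] at hfinal
  rw [htb] at hfinal
  exact lt_irrefl _ hfinal

lemma F6_unique (hK : 0 < K) (hρ : 0 < ρ) (hd : ∀ n, 0 ≤ d n) (hp : ∀ k, 0 ≤ p k)
    {a b : ℝ} (ha : 0 ≤ a) (hb : 0 ≤ b)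
    (hfa : a = Ffun6 N K ρ d p a) (hfb : b = Ffun6 N K ρ d p b) : a = b := by
  by_contra hne
  -- wlog a < b
  wlog hab : a < b generalizing a b
  · exact this hb ha hfb hfa (Ne.symm hne) (lt_of_le_of_ne (not_lt.mp hab) (Ne.symm hne))
  rcases eq_or_lt_of_le ha with ha0 | ha0
  · -- a = 0
    have h0 : Ffun6 N K ρ d p 0 = 0 := by rw [← ha0] at hfa; exact hfa.symm
    have hall := F6_zero_case hK hρ hd hp h0
    have : Ffun6 N K ρ d p b = 0 := by
      unfold Ffun6; simp [hall]
    rw [← hfb] at this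
    rw [← ha0] at hab
    linarith
  · exact F6_scale hK hρ hd hp ha0 hab hfa hfb

end aux

/-- The implicit equation
`δ = (1/K) Σ_n d_n / (ρ + (d_n/K) Σ_k p_k/(1 + p_k δ))`
has a unique nonnegative solution; moreover any nonnegative solution `(δ, δ̃)` of the
separable two-equation system
`δ = (1/K) tr (D (ρ (I + δ̃ D))⁻¹)`, `δ̃ = (1/K) tr (D̃ (ρ (I + δ D̃))⁻¹)`
(with `D = diag d`, `D̃ = diag p`) has its first component satisfying this implicit equation,
hence equal to the unique solution. -/
theorem stmt_6 (N K : ℕ) (hN : 0 < N) (hK : 0 < K) (ρ : ℝ) (hρ : 0 < ρ)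
    (d : Fin N → ℝ) (p : Fin K → ℝ)
    (hd : ∀ n, 0 ≤ d n) (hp : ∀ k, 0 ≤ p k) :
    (∃! δ : ℝ, 0 ≤ δ ∧
        δ = (1 / (K : ℝ)) *
          ∑ n, d n / (ρ + (d n / (K : ℝ)) * ∑ k, p k / (1 + p k * δ))) ∧
    (∀ δ δt : ℝ, 0 ≤ δ → 0 ≤ δt →
        δ = (1 / (K : ℝ)) * ∑ n, d n / (ρ * (1 + δt * d n)) →
        δt = (1 / (K : ℝ)) * ∑ k, p k / (ρ * (1 + δ * p k)) →
        δ = (1 / (K : ℝ)) *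
          ∑ n, d n / (ρ + (d n / (K : ℝ)) * ∑ k, p k / (1 + p k * δ))) := by
  have hK0 : (0:ℝ) < K := by exact_mod_cast hK
  have hKne : (K:ℝ) ≠ 0 := ne_of_gt hK0
  have hρne : ρ ≠ 0 := ne_of_gt hρ
  constructor
  · show ∃! δ : ℝ, 0 ≤ δ ∧ δ = Ffun6 N K ρ d p δ
    obtain ⟨c, hc0, hcf⟩ := F6_exists hK hρ hd hp
    refine ⟨c, ⟨hc0, hcf⟩, ?_⟩
    rintro y ⟨hy0, hyf⟩
    exact F6_unique hK hρ hd hp hy0 hc0 hyf hcf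
  · intro δ δt hδ0 hδt0 h1 h2
    have hsum : ∑ k, p k / (1 + p k * δ) = (K : ℝ) * ρ * δt := by
      calc ∑ k, p k / (1 + p k * δ)
          = ∑ k, ρ * (p k / (ρ * (1 + δ * p k))) := by
            refine Finset.sum_congr rfl fun k _ => ?_
            rw [mul_comm δ (p k), mul_div_assoc', mul_div_mul_left _ _ hρne]
        _ = ρ * ∑ k, p k / (ρ * (1 + δ * p k)) := by rw [Finset.mul_sum]
        _ = (K : ℝ) * ρ * δt := by
            rw [h2]; field_simp; exact Finset.sum_congr rfl fun k _ => by ring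
    calc δ = (1 / (K : ℝ)) * ∑ n, d n / (ρ * (1 + δt * d n)) := h1
      _ = (1 / (K : ℝ)) *
          ∑ n, d n / (ρ + (d n / (K : ℝ)) * ∑ k, p k / (1 + p k * δ)) := by
        refine congrArg _ (Finset.sum_congr rfl fun n _ => ?_)
        rw [hsum]
        congr 1
        field_simp
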